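/- Let X be a subshift over a finite alphabet A ⊆ ℤ, let v ∈ ℤ² be nonzero, and let u ∈ ℤ² be nonzero with ⟨u, v⟩ = 0. Let k > |⟨u^⊥, v⟩| be such that the box B = B_u^k determines cell 0 in X, i.e., for all d, e ∈ X, d|_B = e|_B implies d(0) = e(0). Let c₁, …, c_n ∈ X be pairwise distinct with τ^v(c₁) − c₁ = ⋯ = τ^v(c_n) − c_n, and suppose n₁ < n₂ < ⋯ are natural numbers such that for each i ∈ {1,…,n} the limit d_i = lim_{j→∞} τ^{n_j · u}(c_i) exists in the product topology. Then: (a) τ^v(d₁) − d₁ = ⋯ = τ^v(d_n) − d_n, and (b) for every t ∈ ℤ², the restrictions d₁|_{B−t}, …, d_n|_{B−t} to the translated box B − t are pairwise distinct. -/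

import Mathlib

/-- Translation of a configuration by `t`: `(Translate t c) n = c (n - t)`. -/
def Translate {A : Type*} (t : ℤ × ℤ) (c : ℤ × ℤ → A) : ℤ × ℤ → A :=
  fun n => c (n - t)

/-- The orbit of a configuration: the set of all its translates. -/
def orbit {A : Type*} (c : ℤ × ℤ → A) : Set (ℤ × ℤ → A) :=
  { d | ∃ t : ℤ × ℤ, d = Translate t c }

/-- The orbit closure: the topological closure of the orbit (in the product
topology of the discrete topology on the alphabet). -/
def orbitClosure {A : Type*} [TopologicalSpace A] (c : ℤ × ℤ → A) : Set (ℤ × ℤ → A) :=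
  closure (orbit c)

/-- The standard inner product on `ℤ²`. -/
def inner2 (x u : ℤ × ℤ) : ℤ := x.1 * u.1 + x.2 * u.2

/-- The discrete half plane in direction `u`. -/
def halfPlane (u : ℤ × ℤ) : Set (ℤ × ℤ) := { x | inner2 x u < 0 }

/-- A set of configurations is deterministic in direction `u`: the contents of a
configuration on the half plane `H_u` determine the whole configuration. -/
def DeterministicIn {A : Type*} (X : Set (ℤ × ℤ → A)) (u : ℤ × ℤ) : Prop :=
  ∀ d ∈ X, ∀ e ∈ X, Set.EqOn d e (halfPlane u) → d = e

/-- The set of `D`-patterns appearing in `c` : restrictions of translates of `c` to `D`. -/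
def patterns {A : Type*} (c : ℤ × ℤ → A) (D : Set (ℤ × ℤ)) : Set (D → A) :=
  { p | ∃ t : ℤ × ℤ, ∀ x : D, p x = Translate t c x }

/-- A configuration is periodic if it is fixed by some non-trivial translation. -/
def Periodic {A : Type*} (c : ℤ × ℤ → A) : Prop :=
  ∃ t : ℤ × ℤ, t ≠ 0 ∧ Translate t c = c

/-- The discrete rectangle `{1,…,n} × {1,…,m}`. -/
def rect (n m : ℕ) : Set (ℤ × ℤ) :=
  { x | 1 ≤ x.1 ∧ x.1 ≤ (n : ℤ) ∧ 1 ≤ x.2 ∧ x.2 ≤ (m : ℤ) }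

/-- The difference operator `τ^v - id`, corresponding to multiplication by the
Laurent polynomial `x^v - 1`. -/
def diffOp (v : ℤ × ℤ) (d : ℤ × ℤ → ℤ) : ℤ × ℤ → ℤ := fun n => d (n - v) - d n

/-- Perpendicular vector: `(n,m)^⊥ = (m,−n)`. -/
def perp (u : ℤ × ℤ) : ℤ × ℤ := (u.2, -u.1)

/-- The discrete box `B_u^k`. -/
def Box (u : ℤ × ℤ) (k : ℤ) : Set (ℤ × ℤ) :=
  { x | -k < inner2 x u ∧ inner2 x u < 0 ∧ -k < inner2 x (perp u) ∧ inner2 x (perp u) < k }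

/-- A subshift: a set of configurations closed in the product topology and closed
under translations. -/
def IsSubshift {A : Type*} [TopologicalSpace A] (X : Set (ℤ × ℤ → A)) : Prop :=
  IsClosed X ∧ ∀ c ∈ X, ∀ t : ℤ × ℤ, Translate t c ∈ X

lemma inner2_add (x y w : ℤ × ℤ) : inner2 (x + y) w = inner2 x w + inner2 y w := by
  simp [inner2]; ring

lemma inner2_smul (m : ℤ) (v w : ℤ × ℤ) : inner2 (m • v) w = m * inner2 v w := by
  simp [inner2]; ring

lemma inner2_comm (x y : ℤ × ℤ) : inner2 x y = inner2 y x := by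
  simp [inner2]; ring

lemma inner2_perp_self (u : ℤ × ℤ) : inner2 u (perp u) = 0 := by
  simp [inner2, perp]; ring

lemma prod_ne_zero {u : ℤ × ℤ} (hu : u ≠ 0) : u.1 ≠ 0 ∨ u.2 ≠ 0 := by
  by_contra hc; push_neg at hc; exact hu (Prod.ext hc.1 hc.2)

lemma inner2_self_pos {u : ℤ × ℤ} (hu : u ≠ 0) : 0 < inner2 u u := by
  simp only [inner2]
  rcases prod_ne_zero hu with h | h <;>
    rcases lt_or_gt_of_ne h with h' | h' <;>
    nlinarith [mul_self_nonneg u.1, mul_self_nonneg u.2]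

lemma vperp_ne_zero {u v : ℤ × ℤ} (hu : u ≠ 0) (hv : v ≠ 0) (huv : inner2 u v = 0) :
    inner2 v (perp u) ≠ 0 := by
  intro h
  have hq : 0 < u.1 * u.1 + u.2 * u.2 := by simpa [inner2] using inner2_self_pos hu
  simp only [inner2, perp] at huv h
  have e1 : v.1 * (u.1 * u.1 + u.2 * u.2) = 0 := by linear_combination u.1 * huv + u.2 * h
  have e2 : v.2 * (u.1 * u.1 + u.2 * u.2) = 0 := by linear_combination u.2 * huv - u.1 * h
  have h1 : v.1 = 0 := by rcases mul_eq_zero.mp e1 with h' | h'; exact h'; omega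
  have h2 : v.2 = 0 := by rcases mul_eq_zero.mp e2 with h' | h'; exact h'; omega
  exact hv (Prod.ext h1 h2)

lemma inner2_inj {u : ℤ × ℤ} (hu : u ≠ 0) {x y : ℤ × ℤ}
    (h1 : inner2 x u = inner2 y u) (h2 : inner2 x (perp u) = inner2 y (perp u)) : x = y := by
  have hq : 0 < u.1 * u.1 + u.2 * u.2 := by simpa [inner2] using inner2_self_pos hu
  simp only [inner2, perp] at h1 h2
  have e1 : (x.1 - y.1) * (u.1 * u.1 + u.2 * u.2) = 0 := by linear_combination u.1 * h1 + u.2 * h2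
  have e2 : (x.2 - y.2) * (u.1 * u.1 + u.2 * u.2) = 0 := by linear_combination u.2 * h1 - u.1 * h2
  have h1' : x.1 = y.1 := by rcases mul_eq_zero.mp e1 with h' | h'; omega; omega
  have h2' : x.2 = y.2 := by rcases mul_eq_zero.mp e2 with h' | h'; omega; omega
  exact Prod.ext h1' h2'

lemma finite_strip {u : ℤ × ℤ} (hu : u ≠ 0) (a₁ b₁ a₂ b₂ : ℤ) :
    {x : ℤ × ℤ | a₁ ≤ inner2 x u ∧ inner2 x u ≤ b₁ ∧
      a₂ ≤ inner2 x (perp u) ∧ inner2 x (perp u) ≤ b₂}.Finite := by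
  apply Set.Finite.of_finite_image (f := fun x => (inner2 x u, inner2 x (perp u)))
  · apply Set.Finite.subset (Set.finite_Icc (a₁, a₂) (b₁, b₂))
    rintro ⟨p, q⟩ ⟨x, hx, hxe⟩
    simp only [Prod.mk.injEq] at hxe
    simp only [Set.mem_Icc, Prod.le_def]
    obtain ⟨h1, h2, h3, h4⟩ := hx
    exact ⟨⟨by omega, by omega⟩, by omega, by omega⟩
  · intro x _ y _ h
    simp only [Prod.mk.injEq] at h
    exact inner2_inj hu h.1 h.2

lemma exists_mul_mem {σ : ℤ} (hσ : σ ≠ 0) (w : ℤ) :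
    ∃ m : ℤ, 0 ≤ w + m * σ ∧ w + m * σ < |σ| := by
  rcases lt_or_gt_of_ne hσ with h | h
  · refine ⟨w / (-σ), ?_, ?_⟩ <;>
    · have h' : (0:ℤ) < -σ := by omega
      have e : w % (-σ) = w + (w / (-σ)) * σ := by rw [Int.emod_def]; ring
      have := Int.emod_nonneg w (by omega : -σ ≠ 0)
      have := Int.emod_lt_of_pos w h'
      have habs : |σ| = -σ := abs_of_neg h
      omega
  · refine ⟨-(w / σ), ?_, ?_⟩ <;>
    · have e : w % σ = w + (-(w / σ)) * σ := by rw [Int.emod_def]; ring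
      have := Int.emod_nonneg w (by omega : σ ≠ 0)
      have := Int.emod_lt_of_pos w h
      have habs : |σ| = σ := abs_of_pos h
      omega

lemma periodic_of_step {f : ℤ × ℤ → ℤ} {v : ℤ × ℤ} (h : ∀ y, f (y - v) = f y) :
    ∀ (m : ℤ) (y : ℤ × ℤ), f (y + m • v) = f y := by
  intro m
  induction m using Int.induction_on with
  | zero => simp
  | succ n ih =>
    intro y
    have e : y + ((n : ℤ) + 1) • v - v = y + (n : ℤ) • v := by
      rw [add_smul, one_smul]; abel
    have := h (y + ((n : ℤ) + 1) • v)
    rw [e] at this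
    rw [← this, ih y]
  | pred n ih =>
    intro y
    have e : y + (-(n : ℤ)) • v - v = y + (-(n : ℤ) - 1) • v := by
      rw [sub_smul, one_smul]; abel
    have := h (y + (-(n : ℤ)) • v)
    rw [e] at this
    rw [this, ih y]

lemma propagate {X : Set (ℤ × ℤ → ℤ)} (hX : IsSubshift X) {u : ℤ × ℤ} {k : ℤ}
    (hdet : ∀ d ∈ X, ∀ e ∈ X, Set.EqOn d e (Box u k) → d 0 = e 0)
    {d e : ℤ × ℤ → ℤ} (hd : d ∈ X) (he : e ∈ X) (b : ℤ)
    (H : ∀ x : ℤ × ℤ, b - k < inner2 x u → inner2 x u < b → d x = e x) :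
    ∀ x : ℤ × ℤ, b - k < inner2 x u → d x = e x := by
  have main : ∀ n : ℕ, ∀ x : ℤ × ℤ, b - k < inner2 x u → inner2 x u < b + n → d x = e x := by
    intro n
    induction n with
    | zero => intro x h1 h2; exact H x h1 (by omega)
    | succ n ih =>
      intro x hx1 hx2
      by_cases hlt : inner2 x u < b + n
      · exact ih x hx1 hlt
      · have hx : inner2 x u = b + n := by push_cast at hx2 ⊢; omega
        have h1 : Translate (-x) d ∈ X := hX.2 d hd (-x)
        have h2 : Translate (-x) e ∈ X := hX.2 e he (-x)
        have key := hdet _ h1 _ h2 ?_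
        · simpa [Translate] using key
        · intro y hy
          obtain ⟨hy1, hy2, _, _⟩ := hy
          show d (y - -x) = e (y - -x)
          have hyx : y - -x = y + x := by abel
          rw [hyx]
          have hn0 : (0:ℤ) ≤ (n:ℤ) := by positivity
          exact ih (y + x) (by rw [inner2_add]; omega) (by rw [inner2_add]; omega)
  intro x hx
  exact main (max 0 (inner2 x u - b + 1)).toNat x hx (by omega)

/-- In the setting of the determinism box: if `c₁, …, c_N ∈ X` are
pairwise distinct with equal images under `τ^v − id`, and along a strictly
increasing sequence `n₁ < n₂ < ⋯` the limits `d_i = lim_j τ^{n_j·u}(c_i)` exist,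
then (a) the `d_i` have equal images under `τ^v − id`, and (b) for every `t ∈ ℤ²`
the restrictions of the `d_i` to the translated box `B − t` are pairwise distinct. -/
theorem limit_configurations_properties
    (A : Finset ℤ) (X : Set (ℤ × ℤ → ℤ)) (hX : IsSubshift X)
    (hA : ∀ c ∈ X, ∀ n : ℤ × ℤ, c n ∈ A)
    (v : ℤ × ℤ) (hv : v ≠ 0) (u : ℤ × ℤ) (hu : u ≠ 0) (huv : inner2 u v = 0)
    (k : ℤ) (hk : |inner2 (perp u) v| < k)
    (hdet : ∀ d ∈ X, ∀ e ∈ X, Set.EqOn d e (Box u k) → d 0 = e 0)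
    (N : ℕ) (cs : Fin N → (ℤ × ℤ → ℤ)) (hcs : ∀ i, cs i ∈ X)
    (hinj : Function.Injective cs)
    (hdiff : ∀ i j, diffOp v (cs i) = diffOp v (cs j))
    (ns : ℕ → ℕ) (hns : StrictMono ns)
    (ds : Fin N → (ℤ × ℤ → ℤ))
    (hlim : ∀ i, Filter.Tendsto (fun j => Translate ((ns j : ℤ) • u) (cs i))
      Filter.atTop (nhds (ds i))) :
    (∀ i j, diffOp v (ds i) = diffOp v (ds j)) ∧
    ∀ t : ℤ × ℤ, ∀ i j, i ≠ j → ∃ x : ℤ × ℤ, x + t ∈ Box u k ∧ ds i x ≠ ds j x := by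
  -- pointwise eventual equality
  have hev : ∀ (i : Fin N) (x : ℤ × ℤ),
      ∀ᶠ J in Filter.atTop, Translate ((ns J : ℤ) • u) (cs i) x = ds i x := by
    intro i x
    have h := tendsto_pi_nhds.mp (hlim i) x
    rw [nhds_discrete] at h
    exact Filter.tendsto_pure.mp h
  -- part (a)
  have parta : ∀ i j, diffOp v (ds i) = diffOp v (ds j) := by
    intro i j
    funext n
    obtain ⟨J, ⟨⟨he1, he2⟩, he3, he4⟩⟩ :=
      (((hev i (n - v)).and (hev i n)).and ((hev j (n - v)).and (hev j n))).exists
    simp only [Translate] at he1 he2 he3 he4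
    have key := congrFun (hdiff i j) (n - (ns J : ℤ) • u)
    simp only [diffOp] at key ⊢
    have hrw : n - (ns J : ℤ) • u - v = n - v - (ns J : ℤ) • u := by abel
    rw [hrw] at key
    rw [← he1, ← he2, ← he3, ← he4]
    exact key
  refine ⟨parta, ?_⟩
  intro t i j hij
  by_contra hcon
  push_neg at hcon
  -- basic quantities
  have hσ : inner2 v (perp u) ≠ 0 := vperp_ne_zero hu hv huv
  have hσk : |inner2 v (perp u)| < k := by rwa [inner2_comm v (perp u)]
  have hQ : 0 < inner2 u u := inner2_self_pos hu
  have hvu : inner2 v u = 0 := by rw [inner2_comm]; exact huv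
  -- ds i, ds j ∈ X
  have hds : ∀ i : Fin N, ds i ∈ X := fun i =>
    hX.1.mem_of_tendsto (hlim i) (Filter.Eventually.of_forall fun J => hX.2 _ (hcs i) _)
  -- periodicity of differences along v
  have hpe : ∀ (m : ℤ) (y : ℤ × ℤ),
      ds i (y + m • v) - ds j (y + m • v) = ds i y - ds j y := by
    apply periodic_of_step (f := fun x => ds i x - ds j x)
    intro y
    have := congrFun (parta i j) y
    simp only [diffOp] at this
    omega
  have hpc : ∀ (m : ℤ) (y : ℤ × ℤ),
      cs i (y + m • v) - cs j (y + m • v) = cs i y - cs j y := by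
    apply periodic_of_step (f := fun x => cs i x - cs j x)
    intro y
    have := congrFun (hdiff i j) y
    simp only [diffOp] at this
    omega
  -- slab where ds i = ds j
  have hslab : ∀ x : ℤ × ℤ, -inner2 t u - k < inner2 x u → inner2 x u < -inner2 t u →
      ds i x = ds j x := by
    intro x h1 h2
    obtain ⟨m, hm1, hm2⟩ := exists_mul_mem hσ (inner2 (x + t) (perp u))
    have hbx : (x + m • v) + t ∈ Box u k := by
      have e1 : (x + m • v) + t = (x + t) + m • v := by abel
      have h3 : inner2 ((x + t) + m • v) u = inner2 (x + t) u := by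
        rw [inner2_add, inner2_smul, hvu]; ring
      have h4 : inner2 ((x + t) + m • v) (perp u)
          = inner2 (x + t) (perp u) + m * inner2 v (perp u) := by
        rw [inner2_add, inner2_smul]
      have h5 : inner2 (x + t) u = inner2 x u + inner2 t u := inner2_add x t u
      rw [e1]
      exact ⟨by omega, by omega, by omega, by omega⟩
    have := hcon _ hbx
    have := hpe m x
    omega
  have hhalf : ∀ x : ℤ × ℤ, -inner2 t u - k < inner2 x u → ds i x = ds j x :=
    propagate hX hdet (hds i) (hds j) (-inner2 t u) hslab
  -- cs i ≠ cs j somewhere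
  obtain ⟨p, hp⟩ := Function.ne_iff.mp (fun h => hij (hinj h) : cs i ≠ cs j)
  -- nonzero rows of cs i - cs j in the fundamental strip, arbitrarily low
  have hrow : ∀ a : ℤ, a < inner2 p u →
      ∃ y : ℤ × ℤ, a < inner2 y u ∧ inner2 y u < a + k ∧
        0 ≤ inner2 y (perp u) ∧ inner2 y (perp u) < |inner2 v (perp u)| ∧
        cs i y ≠ cs j y := by
    intro a ha
    by_contra hc
    push_neg at hc
    have hfull : ∀ x : ℤ × ℤ, (a + k) - k < inner2 x u → inner2 x u < a + k →
        cs i x = cs j x := by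
      intro x h1 h2
      obtain ⟨m, hm1, hm2⟩ := exists_mul_mem hσ (inner2 x (perp u))
      have h3 : inner2 (x + m • v) u = inner2 x u := by
        rw [inner2_add, inner2_smul, hvu]; ring
      have h4 : inner2 (x + m • v) (perp u) = inner2 x (perp u) + m * inner2 v (perp u) := by
        rw [inner2_add, inner2_smul]
      have := hc (x + m • v) (by omega) (by omega) (by omega) (by omega)
      have := hpc m x
      omega
    exact hp (propagate hX hdet (hcs i) (hcs j) (a + k) hfull p (by omega))
  -- the finite window
  set L : ℤ := -inner2 t u - k with hL
  set W : Set (ℤ × ℤ) := {x : ℤ × ℤ | L + 1 ≤ inner2 x u ∧ inner2 x u ≤ L + k - 1 ∧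
      0 ≤ inner2 x (perp u) ∧ inner2 x (perp u) ≤ |inner2 v (perp u)| - 1} with hW
  have hWfin : W.Finite := finite_strip hu _ _ _ _
  have hevW : ∀ᶠ J in Filter.atTop, ∀ x ∈ W,
      Translate ((ns J : ℤ) • u) (cs i) x = ds i x ∧
      Translate ((ns J : ℤ) • u) (cs j) x = ds j x :=
    (Filter.eventually_all_finite hWfin).mpr fun x _ => (hev i x).and (hev j x)
  have hevN : ∀ᶠ J in Filter.atTop, L - (ns J : ℤ) * inner2 u u < inner2 p u := by
    refine Filter.eventually_atTop.mpr ⟨(L - inner2 p u).toNat + 1, fun J hJ => ?_⟩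
    have h1 : J ≤ ns J := hns.le_apply
    have h2 : ((ns J : ℕ) : ℤ) * 1 ≤ ((ns J : ℕ) : ℤ) * inner2 u u :=
      mul_le_mul_of_nonneg_left (by omega) (by positivity)
    have h3 : ((J : ℕ) : ℤ) ≤ ((ns J : ℕ) : ℤ) := by exact_mod_cast h1
    omega
  obtain ⟨J, hJW, hJN⟩ := (hevW.and hevN).exists
  obtain ⟨y, hy1, hy2, hy3, hy4, hy5⟩ := hrow (L - (ns J : ℤ) * inner2 u u) hJN
  set x : ℤ × ℤ := y + (ns J : ℤ) • u with hx
  have hxu : inner2 x u = inner2 y u + (ns J : ℤ) * inner2 u u := by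
    rw [hx, inner2_add, inner2_smul]
  have hxp : inner2 x (perp u) = inner2 y (perp u) := by
    rw [hx, inner2_add, inner2_smul, inner2_perp_self]; ring
  have hxW : x ∈ W := ⟨by omega, by omega, by omega, by omega⟩
  obtain ⟨hti, htj⟩ := hJW x hxW
  have hxy : x - (ns J : ℤ) • u = y := by rw [hx]; abel
  have hdsi : ds i x = cs i y := by rw [← hti]; simp only [Translate, hxy]
  have hdsj : ds j x = cs j y := by rw [← htj]; simp only [Translate, hxy]
  have heq : ds i x = ds j x := hhalf x (by omega)
  rw [hdsi, hdsj] at heq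
  exact hy5 heq
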